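/- Let g : ℝ → ℝ be any map with g(x) = T₁(x) for all x ∈ [−1, 1], and define g̃ : ℝ → ℝ by g̃(x) = −g(−x). Then every forward orbit accumulates on all of K₊: for every x ∈ ℝ, the set K₊ is contained in the topological closure of the orbit {f(x) : f ∈ G}, where G is the submonoid of self-maps of ℝ (under composition) generated by {T₀, T₀⁻¹, g, g̃} and T₀⁻¹(x) = 100x. -/

import Mathlib

noncomputable section

/-- The affine contraction of ratio 1/100 fixing 0. -/
def T0 (x : ℝ) : ℝ := x / 100

/-- The affine contraction of ratio 1/100 fixing 1. -/
def T1 (x : ℝ) : ℝ := 1 + (x - 1) / 100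

/-- The affine contraction of ratio 1/100 fixing -1. -/
def Tm1 (x : ℝ) : ℝ := -1 + (x + 1) / 100

/-- The inverse of `T0`. -/
def T0inv (x : ℝ) : ℝ := 100 * x

/-- The `i`-th iterate of `T0` for `i ≥ 0`, and the `|i|`-th iterate of
`T0⁻¹ : x ↦ 100 x` for `i < 0`. -/
def T0z : ℤ → ℝ → ℝ
  | Int.ofNat n => T0^[n]
  | Int.negSucc n => T0inv^[n + 1]

/-- The set `K₊ = {0} ∪ ⋃ i ∈ ℤ, T₀^[i] '' (C₁ ∪ C₋₁)` where `C₁ = T₁ '' C`,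
`C₋₁ = T₋₁ '' C`. -/
def Kplus (C : Set ℝ) : Set ℝ := {0} ∪ ⋃ i : ℤ, T0z i '' (T1 '' C ∪ Tm1 '' C)

lemma T0_iter (n : ℕ) (x : ℝ) : T0^[n] x = x / 100 ^ n := by
  induction n generalizing x with
  | zero => simp
  | succ n ih =>
    rw [Function.iterate_succ_apply, ih, T0]
    ring

lemma T0inv_iter (n : ℕ) (x : ℝ) : T0inv^[n] x = 100 ^ n * x := by
  induction n generalizing x with
  | zero => simp
  | succ n ih =>
    rw [Function.iterate_succ_apply, ih, T0inv]
    ring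

lemma T0z_eq (i : ℤ) (x : ℝ) : T0z i x = (100 : ℝ) ^ (-i) * x := by
  cases i with
  | ofNat n =>
    rw [show T0z (Int.ofNat n) = T0^[n] from rfl, T0_iter]
    rw [show (-(Int.ofNat n) : ℤ) = -(n : ℤ) from rfl, zpow_neg, zpow_natCast]
    field_simp
  | negSucc n =>
    rw [show T0z (Int.negSucc n) = T0inv^[n + 1] from rfl, T0inv_iter]
    rw [show (-(Int.negSucc n) : ℤ) = ((n + 1 : ℕ) : ℤ) by simp [Int.negSucc_eq],
      zpow_natCast]

lemma C_sub (C : Set ℝ) (hne : C.Nonempty) (hcomp : IsCompact C)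
    (hself : C = Tm1 '' C ∪ T0 '' C ∪ T1 '' C) : C ⊆ Set.Icc (-1) 1 := by
  have hbdd := hcomp.bddAbove
  have hbdd' := hcomp.bddBelow
  have hsup : sSup C ≤ 1 := by
    have h2 : sSup C ∈ Tm1 '' C ∪ T0 '' C ∪ T1 '' C := by
      rw [← hself]; exact hcomp.sSup_mem hne
    rcases h2 with (⟨y, hy, hxy⟩ | ⟨y, hy, hxy⟩) | ⟨y, hy, hxy⟩ <;>
    · have hys : y ≤ sSup C := le_csSup hbdd hy
      simp only [Tm1, T0, T1] at hxy
      linarith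
  have hinf : (-1 : ℝ) ≤ sInf C := by
    have h2 : sInf C ∈ Tm1 '' C ∪ T0 '' C ∪ T1 '' C := by
      rw [← hself]; exact hcomp.sInf_mem hne
    rcases h2 with (⟨y, hy, hxy⟩ | ⟨y, hy, hxy⟩) | ⟨y, hy, hxy⟩ <;>
    · have hys : sInf C ≤ y := csInf_le hbdd' hy
      simp only [Tm1, T0, T1] at hxy
      linarith
  intro c hc
  exact ⟨hinf.trans (csInf_le hbdd' hc), (le_csSup hbdd hc).trans hsup⟩

lemma approx (C : Set ℝ) (hC : C ⊆ Set.Icc (-1) 1)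
    (hself : C = Tm1 '' C ∪ T0 '' C ∪ T1 '' C)
    (g : ℝ → ℝ) (hg : ∀ x ∈ Set.Icc (-1 : ℝ) 1, g x = T1 x) :
    ∀ n : ℕ, ∀ c ∈ C, ∃ f ∈ Submonoid.closure
      ({T0, T0inv, g, fun x => -g (-x)} : Set (Function.End ℝ)),
      ∀ z ∈ Set.Icc (-1 : ℝ) 1, (f : ℝ → ℝ) z ∈ Set.Icc (-1 : ℝ) 1 ∧
        |(f : ℝ → ℝ) z - c| ≤ 2 * (1 / 100) ^ n := by
  intro n
  induction n with
  | zero =>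
    intro c hc
    refine ⟨1, one_mem _, fun z hz => ?_⟩
    have h1z : ((1 : Function.End ℝ) : ℝ → ℝ) z = z := rfl
    rw [h1z]
    have h1 := hC hc
    refine ⟨hz, ?_⟩
    rw [abs_le, pow_zero]
    constructor <;> linarith [hz.1, hz.2, h1.1, h1.2]
  | succ n ih =>
    intro c hc
    have hc2 : c ∈ Tm1 '' C ∪ T0 '' C ∪ T1 '' C := hself ▸ hc
    have hB : (0 : ℝ) ≤ 2 * (1 / 100) ^ n := by positivity
    rcases hc2 with (⟨c', hc', rfl⟩ | ⟨c', hc', rfl⟩) | ⟨c', hc', rfl⟩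
    · -- Tm1 case
      obtain ⟨f, hf, hprop⟩ := ih c' hc'
      refine ⟨(show Function.End ℝ from fun x => -g (-x)) * f,
        mul_mem (Submonoid.subset_closure (Set.mem_insert_of_mem _ (Set.mem_insert_of_mem _ (Set.mem_insert_of_mem _ (Set.mem_singleton _))))) hf, fun z hz => ?_⟩
      obtain ⟨hw1, hw2⟩ := hprop z hz
      set w := (f : ℝ → ℝ) z with hwdef
      have happ : (((show Function.End ℝ from fun x => -g (-x)) * f : Function.End ℝ) : ℝ → ℝ) z
          = -g (-w) := rfl
      have hgw : g (-w) = T1 (-w) := hg _ ⟨by linarith [hw1.2], by linarith [hw1.1]⟩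
      rw [happ, hgw]
      have hab := abs_le.mp hw2
      simp only [T1, Tm1]
      constructor
      · constructor <;> · simp only [Set.mem_Icc] at hw1 ⊢; linarith [hw1.1, hw1.2]
      · rw [abs_le, pow_succ]
        constructor <;> linarith [hab.1, hab.2]
    · -- T0 case
      obtain ⟨f, hf, hprop⟩ := ih c' hc'
      refine ⟨(show Function.End ℝ from T0) * f,
        mul_mem (Submonoid.subset_closure (Set.mem_insert _ _)) hf, fun z hz => ?_⟩
      obtain ⟨hw1, hw2⟩ := hprop z hz
      set w := (f : ℝ → ℝ) z with hwdef
      have happ : (((show Function.End ℝ from T0) * f : Function.End ℝ) : ℝ → ℝ) z = T0 w := rfl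
      rw [happ]
      have hab := abs_le.mp hw2
      simp only [T0]
      constructor
      · constructor <;> · simp only [Set.mem_Icc] at hw1 ⊢; linarith [hw1.1, hw1.2]
      · rw [abs_le, pow_succ]
        constructor <;> linarith [hab.1, hab.2]
    · -- T1 case
      obtain ⟨f, hf, hprop⟩ := ih c' hc'
      refine ⟨(show Function.End ℝ from g) * f,
        mul_mem (Submonoid.subset_closure (Set.mem_insert_of_mem _ (Set.mem_insert_of_mem _ (Set.mem_insert _ _)))) hf, fun z hz => ?_⟩
      obtain ⟨hw1, hw2⟩ := hprop z hz
      set w := (f : ℝ → ℝ) z with hwdef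
      have happ : (((show Function.End ℝ from g) * f : Function.End ℝ) : ℝ → ℝ) z = g w := rfl
      rw [happ, hg _ hw1]
      have hab := abs_le.mp hw2
      simp only [T1]
      constructor
      · constructor <;> · simp only [Set.mem_Icc] at hw1 ⊢; linarith [hw1.1, hw1.2]
      · rw [abs_le, pow_succ]
        constructor <;> linarith [hab.1, hab.2]

theorem stmt_16 (C : Set ℝ) (hne : C.Nonempty) (hcomp : IsCompact C)
    (hself : C = Tm1 '' C ∪ T0 '' C ∪ T1 '' C)
    (g : ℝ → ℝ)
    (hg_T1 : ∀ x ∈ Set.Icc (-1 : ℝ) 1, g x = T1 x) :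
    ∀ x : ℝ, Kplus C ⊆ closure {y : ℝ |
      ∃ f ∈ Submonoid.closure ({T0, T0inv, g, fun x => -g (-x)} : Set (Function.End ℝ)),
        f x = y} := by
  intro x y hy
  set S : Set (Function.End ℝ) := {T0, T0inv, g, fun x => -g (-x)} with hSdef
  have hT0 : (show Function.End ℝ from T0) ∈ Submonoid.closure S :=
    Submonoid.subset_closure (Set.mem_insert _ _)
  have hT0inv : (show Function.End ℝ from T0inv) ∈ Submonoid.closure S :=
    Submonoid.subset_closure (Set.mem_insert_of_mem _ (Set.mem_insert _ _))
  have hgmem : (show Function.End ℝ from g) ∈ Submonoid.closure S :=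
    Submonoid.subset_closure (Set.mem_insert_of_mem _ (Set.mem_insert_of_mem _ (Set.mem_insert _ _)))
  have hgtmem : (show Function.End ℝ from fun x => -g (-x)) ∈ Submonoid.closure S :=
    Submonoid.subset_closure (Set.mem_insert_of_mem _ (Set.mem_insert_of_mem _ (Set.mem_insert_of_mem _ (Set.mem_singleton _))))
  have hiter : ∀ h : Function.End ℝ, h ∈ Submonoid.closure S →
      ∀ n : ℕ, (h^[n] : Function.End ℝ) ∈ Submonoid.closure S := by
    intro h hh n
    induction n with
    | zero => exact one_mem _
    | succ n ihn =>
      exact (congrArg (· ∈ Submonoid.closure S) (Function.iterate_succ' h n : (h^[n+1] : Function.End ℝ) = h * (show Function.End ℝ from h^[n]))).mpr (mul_mem hh ihn)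
  have hT0z : ∀ i : ℤ, (show Function.End ℝ from T0z i) ∈ Submonoid.closure S := by
    intro i
    cases i with
    | ofNat k => exact hiter _ hT0 k
    | negSucc k => exact hiter _ hT0inv (k + 1)
  have hCsub := C_sub C hne hcomp hself
  rcases hy with hy | hy
  · -- y = 0
    rw [Set.mem_singleton_iff] at hy
    subst hy
    rw [Metric.mem_closure_iff]
    intro ε hε
    have hxpos : (0 : ℝ) < |x| + 1 := by positivity
    obtain ⟨n, hn⟩ := exists_pow_lt_of_lt_one (div_pos hε hxpos)
      (by norm_num : (1 : ℝ) / 100 < 1)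
    refine ⟨T0^[n] x, ⟨(show Function.End ℝ from T0^[n]), hiter _ hT0 n, rfl⟩, ?_⟩
    rw [Real.dist_eq, T0_iter]
    have hp : (0 : ℝ) < 100 ^ n := by positivity
    rw [abs_sub_comm, sub_zero, abs_div, abs_of_pos hp, div_lt_iff₀ hp]
    have h1n : ((1 : ℝ) / 100) ^ n = 1 / 100 ^ n := by rw [div_pow, one_pow]
    rw [h1n, div_lt_div_iff₀ hp hxpos] at hn
    nlinarith [abs_nonneg x, hp]
  · -- y in the union
    simp only [Set.mem_iUnion] at hy
    obtain ⟨i, a, ha, rfl⟩ := hy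
    rw [Metric.mem_closure_iff]
    intro ε hε
    set r : ℝ := (100 : ℝ) ^ (-i) with hrdef
    have hrpos : 0 < r := zpow_pos (by norm_num) _
    obtain ⟨m, hm⟩ := pow_unbounded_of_one_lt |x| (by norm_num : (1 : ℝ) < 100)
    have hpm : (0 : ℝ) < 100 ^ m := by positivity
    have hxm : T0^[m] x ∈ Set.Icc (-1 : ℝ) 1 := by
      rw [T0_iter]
      rw [abs_lt] at hm
      constructor
      · rw [le_div_iff₀ hpm]; linarith [hm.1]
      · rw [div_le_iff₀ hpm]; linarith [hm.2]
    obtain ⟨n, hn⟩ := exists_pow_lt_of_lt_one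
      (div_pos hε (by positivity : (0 : ℝ) < 2 * r)) (by norm_num : (1 : ℝ) / 100 < 1)
    rw [lt_div_iff₀ (by positivity : (0 : ℝ) < 2 * r)] at hn
    have hB : (0 : ℝ) ≤ 2 * (1 / 100) ^ n := by positivity
    have hdist : ∀ a b : ℝ, dist (T0z i a) (T0z i b) = r * |a - b| := by
      intro a b
      rw [Real.dist_eq, T0z_eq, T0z_eq, ← mul_sub, abs_mul, abs_of_pos hrpos]
    rcases ha with ⟨c, hc, rfl⟩ | ⟨c, hc, rfl⟩
    · -- a = T1 c
      obtain ⟨f, hf, hprop⟩ := approx C hCsub hself g hg_T1 n c hc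
      obtain ⟨hw1, hw2⟩ := hprop _ hxm
      set w := (f : ℝ → ℝ) (T0^[m] x) with hwdef
      refine ⟨T0z i (g w),
        ⟨(show Function.End ℝ from T0z i) * (show Function.End ℝ from g) * f * (show Function.End ℝ from T0^[m]),
          mul_mem (mul_mem (mul_mem (hT0z i) hgmem) hf) (hiter _ hT0 m), rfl⟩, ?_⟩
      rw [hdist]
      have habs : |T1 c - g w| ≤ 2 * (1 / 100) ^ n := by
        rw [hg_T1 w hw1]
        have hab := abs_le.mp hw2
        simp only [T1]
        rw [abs_le]
        constructor <;> linarith [hab.1, hab.2]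
      calc r * |T1 c - g w| ≤ r * (2 * (1 / 100) ^ n) :=
            mul_le_mul_of_nonneg_left habs hrpos.le
        _ < ε := by nlinarith [hn]
    · -- a = Tm1 c
      obtain ⟨f, hf, hprop⟩ := approx C hCsub hself g hg_T1 n c hc
      obtain ⟨hw1, hw2⟩ := hprop _ hxm
      set w := (f : ℝ → ℝ) (T0^[m] x) with hwdef
      refine ⟨T0z i (-g (-w)),
        ⟨(show Function.End ℝ from T0z i) * (show Function.End ℝ from fun x => -g (-x)) * f * (show Function.End ℝ from T0^[m]),
          mul_mem (mul_mem (mul_mem (hT0z i) hgtmem) hf) (hiter _ hT0 m), rfl⟩, ?_⟩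
      rw [hdist]
      have hgw : g (-w) = T1 (-w) := hg_T1 _ ⟨by linarith [hw1.2], by linarith [hw1.1]⟩
      have habs : |Tm1 c - (-g (-w))| ≤ 2 * (1 / 100) ^ n := by
        rw [hgw]
        have hab := abs_le.mp hw2
        simp only [T1, Tm1]
        rw [abs_le]
        constructor <;> linarith [hab.1, hab.2]
      calc r * |Tm1 c - (-g (-w))| ≤ r * (2 * (1 / 100) ^ n) :=
            mul_le_mul_of_nonneg_left habs hrpos.le
        _ < ε := by nlinarith [hn]
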